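/- The finite NM-chain NM_n satisfies the identity (a sentence of the algebraic language) ⋀_{i<k}((x_i ⇒ x_{i+1}) ⇒ x_{i+1}) ≤ ⋁_{i<k+1} x_i for all assignments if and only if n < 2k + 2. -/

import Mathlib

noncomputable def nmMul (x y : ℝ) : ℝ := if x ≤ 1 - y then 0 else min x y

noncomputable def nmImp (x y : ℝ) : ℝ := if x ≤ y then 1 else max (1 - x) y

def IsInfIn (A S : Set ℝ) (a : ℝ) : Prop :=
  a ∈ A ∧ (∀ s ∈ S, a ≤ s) ∧ ∀ b ∈ A, (∀ s ∈ S, b ≤ s) → b ≤ a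

def IsSupIn (A S : Set ℝ) (a : ℝ) : Prop :=
  a ∈ A ∧ (∀ s ∈ S, s ≤ a) ∧ ∀ b ∈ A, (∀ s ∈ S, s ≤ b) → a ≤ b

def NMinfSet : Set ℝ := {x | ∃ n : ℕ, 0 < n ∧ (x = 1 / (n : ℝ) ∨ x = 1 - 1 / (n : ℝ))}

def NMfin (n : ℕ) : Set ℝ := {x | ∃ k : ℕ, k ≤ n - 1 ∧ x = (k : ℝ) / ((n : ℝ) - 1)}

lemma nmImp_le_one {u v : ℝ} (hu : 0 ≤ u) (hv : v ≤ 1) : nmImp u v ≤ 1 := by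
  unfold nmImp
  split_ifs with h
  · exact le_refl 1
  · exact max_le (by linarith) hv

lemma dimp_eq_one {u v : ℝ} (hvu : v < u) (hsum : 1 ≤ u + v) :
    nmImp (nmImp u v) v = 1 := by
  unfold nmImp
  rw [if_neg (not_le.mpr hvu)]
  rw [max_eq_right (by linarith : 1 - u ≤ v)]
  rw [if_pos le_rfl]

lemma dimp_of_le {u v : ℝ} (h : u ≤ v) (hv0 : 0 ≤ v) (hv1 : v ≤ 1) :
    nmImp (nmImp u v) v = v := by
  have h1 : nmImp u v = 1 := by rw [nmImp, if_pos h]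
  rw [h1, nmImp]
  split_ifs with h2
  · linarith
  · rw [show (1:ℝ) - 1 = 0 by ring, max_eq_right hv0]

lemma dimp_of_sum_lt {u v : ℝ} (hvu : v < u) (h : u + v < 1) :
    nmImp (nmImp u v) v = u := by
  have h1 : nmImp u v = 1 - u := by
    rw [nmImp, if_neg (not_le.mpr hvu), max_eq_left (by linarith)]
  rw [h1, nmImp, if_neg (by push_neg; linarith), show (1:ℝ) - (1 - u) = u by ring,
    max_eq_left hvu.le]

lemma dimp_gt {u v : ℝ} (hv0 : 0 ≤ v) (hv1 : v ≤ 1)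
    (hu : u < nmImp (nmImp u v) v) (hv : v < nmImp (nmImp u v) v) :
    v < u ∧ 1 ≤ u + v := by
  have hvu : v < u := by
    by_contra h
    push_neg at h
    rw [dimp_of_le h hv0 hv1] at hv
    exact absurd hv (lt_irrefl v)
  refine ⟨hvu, ?_⟩
  by_contra h
  push_neg at h
  rw [dimp_of_sum_lt hvu h] at hu
  exact absurd hu (lt_irrefl u)

theorem nmfin_satisfies_Sk_iff (n k : ℕ) (hn : 2 ≤ n) (hk : 1 ≤ k) :
    (∀ x : ℕ → ℝ, (∀ i, x i ∈ NMfin n) →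
      (Finset.range k).inf' (Finset.nonempty_range_iff.mpr (by omega))
        (fun i => nmImp (nmImp (x i) (x (i + 1))) (x (i + 1)))
      ≤ (Finset.range (k + 1)).sup' (Finset.nonempty_range_iff.mpr (by omega)) x)
    ↔ n < 2 * k + 2 := by
  have hN : (0:ℝ) < (n:ℝ) - 1 := by
    have h2 : (2:ℝ) ≤ (n:ℝ) := by exact_mod_cast hn
    linarith
  have hcast : ((n - 1 : ℕ) : ℝ) = (n:ℝ) - 1 := by
    have := Nat.cast_sub (by omega : 1 ≤ n) (R := ℝ)
    simpa using this
  constructor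
  · -- identity holds → n < 2k+2
    intro H
    by_contra hlt
    push_neg at hlt  -- 2*k+2 ≤ n
    set x : ℕ → ℝ := fun i => ((n - 2 - i : ℕ) : ℝ) / ((n:ℝ) - 1) with hxdef
    have hmem : ∀ i, x i ∈ NMfin n := fun i => ⟨n - 2 - i, by omega, rfl⟩
    have hH := H x hmem
    have hinf : (1:ℝ) ≤ (Finset.range k).inf' (Finset.nonempty_range_iff.mpr (by omega))
        (fun i => nmImp (nmImp (x i) (x (i + 1))) (x (i + 1))) := by
      apply Finset.le_inf'
      intro i hi
      rw [Finset.mem_range] at hi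
      have hAB : (n - 2 - (i+1) : ℕ) < (n - 2 - i : ℕ) := by omega
      have hsumN : (n - 1 : ℕ) ≤ (n - 2 - i : ℕ) + (n - 2 - (i+1) : ℕ) := by omega
      have hvu : x (i+1) < x i := by
        show ((n - 2 - (i+1) : ℕ) : ℝ) / ((n:ℝ) - 1) < ((n - 2 - i : ℕ) : ℝ) / ((n:ℝ) - 1)
        apply (div_lt_div_iff_of_pos_right hN).mpr
        exact_mod_cast hAB
      have hsum : 1 ≤ x i + x (i+1) := by
        show 1 ≤ ((n - 2 - i : ℕ) : ℝ) / ((n:ℝ) - 1) + ((n - 2 - (i+1) : ℕ) : ℝ) / ((n:ℝ) - 1)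
        rw [← add_div, le_div_iff₀ hN, one_mul, ← hcast]
        exact_mod_cast hsumN
      rw [dimp_eq_one hvu hsum]
    have hsup : (Finset.range (k + 1)).sup' (Finset.nonempty_range_iff.mpr (by omega)) x
        < 1 := by
      rw [Finset.sup'_lt_iff]
      intro i hi
      show ((n - 2 - i : ℕ) : ℝ) / ((n:ℝ) - 1) < 1
      rw [div_lt_one hN, ← hcast]
      exact_mod_cast (by omega : (n - 2 - i : ℕ) < n - 1)
    linarith
  · -- n < 2k+2 → identity holds
    intro hn2 x hx
    by_contra hcon
    push_neg at hcon
    set S := (Finset.range (k + 1)).sup' (Finset.nonempty_range_iff.mpr (by omega)) x with hS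
    set I := (Finset.range k).inf' (Finset.nonempty_range_iff.mpr (by omega))
        (fun i => nmImp (nmImp (x i) (x (i + 1))) (x (i + 1))) with hI
    have hx' : ∀ i, ∃ a : ℕ, a ≤ n - 1 ∧ x i = (a : ℝ) / ((n : ℝ) - 1) := hx
    choose a ha hxa using hx'
    have hxle : ∀ j, j ≤ k → x j ≤ S := by
      intro j hj
      exact Finset.le_sup' x (Finset.mem_range.mpr (by omega))
    have hIle : ∀ i, i < k → I ≤ nmImp (nmImp (x i) (x (i + 1))) (x (i + 1)) := by
      intro i hi
      exact Finset.inf'_le _ (Finset.mem_range.mpr hi)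
    have hx0 : ∀ j, 0 ≤ x j := by
      intro j
      rw [hxa j]
      positivity
    have hx1 : ∀ j, x j ≤ 1 := by
      intro j
      rw [hxa j, div_le_one hN, ← hcast]
      exact_mod_cast ha j
    -- each term is ≤ 1, so all x j < 1 for j ≤ k
    have ht1 : nmImp (nmImp (x 0) (x 1)) (x 1) ≤ 1 := by
      apply nmImp_le_one _ (hx1 1)
      unfold nmImp
      split_ifs with h
      · norm_num
      · exact le_trans (by linarith [hx1 0] : (0:ℝ) ≤ 1 - x 0) (le_max_left _ _)
    have hxlt1 : ∀ j, j ≤ k → x j < 1 :=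
      fun j hj => lt_of_le_of_lt (hxle j hj) (lt_of_lt_of_le hcon (le_trans (hIle 0 hk) ht1))
    have hkey : ∀ i, i < k → x (i+1) < x i ∧ 1 ≤ x i + x (i+1) := by
      intro i hi
      apply dimp_gt (hx0 (i+1)) (hx1 (i+1))
      · exact lt_of_le_of_lt (hxle i (by omega)) (lt_of_lt_of_le hcon (hIle i hi))
      · exact lt_of_le_of_lt (hxle (i+1) (by omega)) (lt_of_lt_of_le hcon (hIle i hi))
    -- translate to naturals
    have hdecn : ∀ i, i < k → a (i+1) < a i := by
      intro i hi
      have h := (hkey i hi).1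
      rw [hxa i, hxa (i+1)] at h
      have : ((a (i+1) : ℝ)) < a i := by
        have := (div_lt_div_iff_of_pos_right hN).mp h
        exact this
      exact_mod_cast this
    have hsumn : n - 1 ≤ a (k-1) + a k := by
      have hk1 : k - 1 < k := by omega
      have h := (hkey (k-1) hk1).2
      rw [show k - 1 + 1 = k by omega] at h
      rw [hxa (k-1), hxa k, ← add_div, le_div_iff₀ hN, one_mul, ← hcast] at h
      exact_mod_cast h
    have hlt1n : ∀ j, j ≤ k → a j < n - 1 := by
      intro j hj
      have h := hxlt1 j hj
      rw [hxa j, div_lt_one hN, ← hcast] at h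
      exact_mod_cast h
    have hchain : ∀ i, i ≤ k → a i + i ≤ a 0 := by
      intro i
      induction i with
      | zero => intro _; omega
      | succ m ih =>
        intro hm
        have h1 := ih (by omega)
        have h2 := hdecn m (by omega)
        omega
    have h1 := hchain (k-1) (by omega)
    have h2 := hchain k le_rfl
    have h3 := hlt1n 0 (by omega)
    omega
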